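/- Fix k >= 1. For each Fubini word w in W_{n,k} with associated permutation pi(w) in S_k, define dim(w) = -inv(pi(w)) - n + sum_{i=1}^n pi(w)^{-1}_{w_i}. Then the statistic dim is Mahonian on W_{n,k}: sum over w in W_{n,k} of q^{dim(w)} equals [k]!_q * Stir_q(n,k). -/

import Mathlib

/-- The `q`-analogue `[k]_q = 1 + q + … + q^{k-1}`. -/
noncomputable def qnat (k : ℕ) : Polynomial ℤ :=
  ∑ i ∈ Finset.range k, Polynomial.X ^ i

/-- The `q`-factorial `[k]!_q = [k]_q [k-1]_q ⋯ [1]_q`. -/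
noncomputable def qFactorial (k : ℕ) : Polynomial ℤ :=
  ∏ j ∈ Finset.range k, qnat (j + 1)

/-- The `q`-Stirling numbers. -/
noncomputable def qStirling : ℕ → ℕ → Polynomial ℤ
  | 0, 0 => 1
  | 0, _ + 1 => 0
  | _ + 1, 0 => 0
  | n + 1, k + 1 => qStirling n k + qnat (k + 1) * qStirling n (k + 1)

/-- The position (0-indexed) of the first occurrence of the letter `c` in the word `w`. -/
noncomputable def firstOcc (n k : ℕ) (w : Fin n → Fin k) (c : Fin k) : ℕ :=
  sInf {i : ℕ | ∃ h : i < n, w ⟨i, h⟩ = c}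

/-- `inv(π(w))`: the number of inversions of the permutation `π(w) ∈ S_k` formed by the
initial letters of `w`, i.e. the number of pairs of letters `c' < c` such that the first
occurrence of `c` precedes the first occurrence of `c'`. -/
noncomputable def invStat (n k : ℕ) (w : Fin n → Fin k) : ℕ :=
  (Finset.univ.filter fun p : Fin k × Fin k =>
    firstOcc n k w p.1 < firstOcc n k w p.2 ∧ p.2 < p.1).card

/-- `π(w)⁻¹_c`: the (1-indexed) position of the letter `c` in `π(w)`, i.e. the number of
letters whose first occurrence is no later than that of `c`. -/
noncomputable def posStat (n k : ℕ) (w : Fin n → Fin k) (c : Fin k) : ℕ :=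
  (Finset.univ.filter fun c' : Fin k =>
    firstOcc n k w c' ≤ firstOcc n k w c).card

/-- `dim(w) = -inv(π(w)) - n + ∑_{i=1}^n π(w)⁻¹_{w_i}`. -/
noncomputable def dimStat (n k : ℕ) (w : Fin n → Fin k) : ℤ :=
  -(invStat n k w : ℤ) - (n : ℤ) + ∑ i : Fin n, (posStat n k w (w i) : ℤ)

lemma firstOcc_spec {n k : ℕ} {w : Fin n → Fin k} {c : Fin k} (h : ∃ i, w i = c) :
    ∃ h' : firstOcc n k w c < n, w ⟨firstOcc n k w c, h'⟩ = c := by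
  obtain ⟨i, hi⟩ := h
  have hne : {j : ℕ | ∃ h : j < n, w ⟨j, h⟩ = c}.Nonempty := ⟨i.val, i.isLt, by simpa using hi⟩
  exact Nat.sInf_mem hne

lemma firstOcc_le {n k : ℕ} {w : Fin n → Fin k} {c : Fin k} {i : ℕ} (h : i < n)
    (hw : w ⟨i, h⟩ = c) : firstOcc n k w c ≤ i :=
  Nat.sInf_le ⟨h, hw⟩

lemma firstOcc_inj {n k : ℕ} {w : Fin n → Fin k} (hw : ∀ c, ∃ i, w i = c) :
    Function.Injective (firstOcc n k w) := by
  intro c1 c2 h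
  obtain ⟨h1, e1⟩ := firstOcc_spec (hw c1)
  obtain ⟨h2, e2⟩ := firstOcc_spec (hw c2)
  rw [← e1, ← e2]
  congr 1
  exact Fin.ext h

lemma snoc_mk_lt {n k : ℕ} (w' : Fin n → Fin k) (c : Fin k) (i : ℕ) (h : i < n) :
    (Fin.snoc w' c : Fin (n+1) → Fin k) ⟨i, Nat.lt_succ_of_lt h⟩ = w' ⟨i, h⟩ := by
  simp [Fin.snoc, h]

lemma snoc_mk_lt' {n k : ℕ} (w' : Fin n → Fin k) (c : Fin k) (i : ℕ) (h : i < n)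
    (h' : i < n + 1) : (Fin.snoc w' c : Fin (n+1) → Fin k) ⟨i, h'⟩ = w' ⟨i, h⟩ := by
  simp [Fin.snoc, h]

lemma snoc_mk_last {n k : ℕ} (w' : Fin n → Fin k) (c : Fin k) (h : n < n + 1) :
    (Fin.snoc w' c : Fin (n+1) → Fin k) ⟨n, h⟩ = c := by
  simp [Fin.snoc]

lemma fo_snoc_mem {n k : ℕ} {w' : Fin n → Fin k} {c c' : Fin k} (h : ∃ i, w' i = c') :
    firstOcc (n+1) k (Fin.snoc w' c) c' = firstOcc n k w' c' := by
  obtain ⟨h1, e1⟩ := firstOcc_spec h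
  have hle : firstOcc (n+1) k (Fin.snoc w' c) c' ≤ firstOcc n k w' c' :=
    firstOcc_le (Nat.lt_succ_of_lt h1) (by rw [snoc_mk_lt' _ _ _ h1, e1])
  apply le_antisymm hle
  obtain ⟨h2, e2⟩ := firstOcc_spec (c := c') (w := (Fin.snoc w' c : Fin (n+1) → Fin k))
    ⟨⟨firstOcc n k w' c', Nat.lt_succ_of_lt h1⟩, by rw [snoc_mk_lt' _ _ _ h1, e1]⟩
  have han : firstOcc (n+1) k (Fin.snoc w' c) c' < n := lt_of_le_of_lt hle h1
  exact firstOcc_le han (by rw [← snoc_mk_lt' w' c _ han h2]; exact e2)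

lemma fo_snoc_new {n k : ℕ} {w' : Fin n → Fin k} {c : Fin k} (h : ∀ i, w' i ≠ c) :
    firstOcc (n+1) k (Fin.snoc w' c) c = n := by
  obtain ⟨h1, e1⟩ := firstOcc_spec (c := c) (w := (Fin.snoc w' c : Fin (n+1) → Fin k))
    ⟨⟨n, n.lt_succ_self⟩, snoc_mk_last _ _ _⟩
  rcases Nat.lt_succ_iff_lt_or_eq.mp h1 with h2 | h2
  · rw [snoc_mk_lt' _ _ _ h2] at e1
    exact absurd e1 (h _)
  · exact h2

lemma fo_comp_succAbove {n m : ℕ} (v : Fin n → Fin m) (c : Fin (m+1)) (j : Fin m) :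
    firstOcc n (m+1) (c.succAbove ∘ v) (c.succAbove j) = firstOcc n m v j := by
  unfold firstOcc
  congr 1
  ext i
  exact exists_congr fun h =>
    ⟨fun e => Fin.succAbove_right_injective e, fun e => by rw [Function.comp_apply, e]⟩

section CaseA
variable {n k : ℕ} {w' : Fin n → Fin k}

lemma invStat_snoc (hw : ∀ c, ∃ i, w' i = c) (c : Fin k) : invStat (n+1) k (Fin.snoc w' c) = invStat n k w' := by
  unfold invStat
  congr 1
  apply Finset.filter_congr
  intro p _
  rw [fo_snoc_mem (hw p.1), fo_snoc_mem (hw p.2)]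

lemma posStat_snoc (hw : ∀ c, ∃ i, w' i = c) (c c' : Fin k) :
    posStat (n+1) k (Fin.snoc w' c) c' = posStat n k w' c' := by
  unfold posStat
  congr 1
  apply Finset.filter_congr
  intro x _
  rw [fo_snoc_mem (hw x), fo_snoc_mem (hw c')]

lemma posStat_pos (c' : Fin k) : 1 ≤ posStat n k w' c' := by
  unfold posStat
  exact Finset.card_pos.2 ⟨c', by simp⟩

lemma posStat_le (c' : Fin k) : posStat n k w' c' ≤ k := by
  unfold posStat
  exact (Finset.card_filter_le _ _).trans (by simp)

lemma dimStat_snoc_A (hw : ∀ c, ∃ i, w' i = c) (c : Fin k) :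
    dimStat (n+1) k (Fin.snoc w' c) = dimStat n k w' + ((posStat n k w' c : ℤ) - 1) := by
  unfold dimStat
  rw [invStat_snoc hw, Fin.sum_univ_castSucc]
  have h1 : ∀ i : Fin n, (Fin.snoc w' c : Fin (n+1) → Fin k) i.castSucc = w' i :=
    fun i => by simp
  have h2 : (Fin.snoc w' c : Fin (n+1) → Fin k) (Fin.last n) = c := by simp
  simp only [h1, h2, posStat_snoc hw]
  push_cast
  ring

lemma posStat_lt_of_fo_lt {c1 c2 : Fin k}
    (h : firstOcc n k w' c1 < firstOcc n k w' c2) :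
    posStat n k w' c1 < posStat n k w' c2 := by
  unfold posStat
  apply Finset.card_lt_card
  constructor
  · intro x hx
    simp only [Finset.mem_filter, Finset.mem_univ, true_and] at hx ⊢
    exact hx.trans h.le
  · intro hsub
    have := hsub (Finset.mem_filter.2 ⟨Finset.mem_univ c2, le_refl _⟩)
    simp only [Finset.mem_filter, Finset.mem_univ, true_and] at this
    exact absurd h (not_lt.2 this)

lemma posStat_inj (hw : ∀ c, ∃ i, w' i = c) : Function.Injective (posStat n k w') := by
  intro c1 c2 h
  by_contra hne
  rcases lt_or_gt_of_ne (fun e => hne (firstOcc_inj hw e)) with hlt | hlt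
  · exact absurd h (posStat_lt_of_fo_lt hlt).ne
  · exact absurd h.symm (posStat_lt_of_fo_lt hlt).ne

lemma posStat_image (hw : ∀ c, ∃ i, w' i = c) : Finset.univ.image (fun c' => posStat n k w' c' - 1) = Finset.range k := by
  apply Finset.eq_of_subset_of_card_le
  · intro x hx
    simp only [Finset.mem_image, Finset.mem_univ, true_and] at hx
    obtain ⟨c', rfl⟩ := hx
    have := posStat_le (w' := w') c'
    have := posStat_pos (w' := w') c'
    simp only [Finset.mem_range]
    omega
  · rw [Finset.card_range, Finset.card_image_of_injective]
    · simp
    · intro c1 c2 h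
      dsimp only at h
      apply posStat_inj hw
      have h1 := posStat_pos (w' := w') c1
      have h2 := posStat_pos (w' := w') c2
      omega

lemma sum_T_posStat (hw : ∀ c, ∃ i, w' i = c) :
    ∑ c' : Fin k, LaurentPolynomial.T (R := ℤ) ((posStat n k w' c' : ℤ) - 1)
      = ∑ j ∈ Finset.range k, LaurentPolynomial.T (R := ℤ) (j : ℤ) := by
  rw [← posStat_image hw, Finset.sum_image]
  · apply Finset.sum_congr rfl
    intro c' _
    congr 1
    have := posStat_pos (w' := w') c'
    omega
  · intro c1 _ c2 _ h
    dsimp only at h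
    apply posStat_inj hw
    have h1 := posStat_pos (w' := w') c1
    have h2 := posStat_pos (w' := w') c2
    omega
end CaseA

section CaseB
variable {n m : ℕ} {v : Fin n → Fin m} {c : Fin (m+1)}

lemma fo_B_succAbove (hv : ∀ j, ∃ i, v i = j) (j : Fin m) :
    firstOcc (n+1) (m+1) (Fin.snoc (c.succAbove ∘ v) c) (c.succAbove j) = firstOcc n m v j := by
  rw [fo_snoc_mem, fo_comp_succAbove]
  obtain ⟨i, hi⟩ := hv j
  exact ⟨i, by simp [hi]⟩

lemma fo_B_c : firstOcc (n+1) (m+1) (Fin.snoc (c.succAbove ∘ v) c) c = n :=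
  fo_snoc_new fun i => Fin.succAbove_ne c (v i)

lemma fo_B_lt (hv : ∀ j, ∃ i, v i = j) (j : Fin m) : firstOcc n m v j < n :=
  (firstOcc_spec (hv j)).1

lemma fo_B_le (hv : ∀ j, ∃ i, v i = j) (x : Fin (m+1)) :
    firstOcc (n+1) (m+1) (Fin.snoc (c.succAbove ∘ v) c) x ≤ n := by
  by_cases hx : x = c
  · rw [hx, fo_B_c]
  · obtain ⟨j, rfl⟩ := Fin.exists_succAbove_eq hx
    rw [fo_B_succAbove hv]
    exact (fo_B_lt hv j).le

lemma surj_B (hv : ∀ j, ∃ i, v i = j) (b : Fin (m+1)) :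
    ∃ i : Fin (n+1), (Fin.snoc (c.succAbove ∘ v) c : Fin (n+1) → Fin (m+1)) i = b := by
  by_cases hb : b = c
  · exact ⟨Fin.last n, by simp [hb]⟩
  · obtain ⟨j, rfl⟩ := Fin.exists_succAbove_eq hb
    obtain ⟨i, hi⟩ := hv j
    exact ⟨i.castSucc, by simp [hi]⟩

lemma posStat_B_succAbove (hv : ∀ j, ∃ i, v i = j) (j : Fin m) :
    posStat (n+1) (m+1) (Fin.snoc (c.succAbove ∘ v) c) (c.succAbove j) = posStat n m v j := by
  classical
  unfold posStat
  have key : (Finset.univ.filter fun c' : Fin (m+1) =>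
      firstOcc (n+1) (m+1) (Fin.snoc (c.succAbove ∘ v) c) c'
        ≤ firstOcc (n+1) (m+1) (Fin.snoc (c.succAbove ∘ v) c) (c.succAbove j))
      = (Finset.univ.filter fun j' : Fin m =>
          firstOcc n m v j' ≤ firstOcc n m v j).image c.succAbove := by
    ext x
    simp only [Finset.mem_filter, Finset.mem_univ, true_and, Finset.mem_image]
    rw [fo_B_succAbove hv]
    constructor
    · intro hx
      by_cases hxc : x = c
      · rw [hxc, fo_B_c] at hx
        exact absurd (lt_of_le_of_lt hx (fo_B_lt hv j)) (lt_irrefl n)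
      · obtain ⟨j', rfl⟩ := Fin.exists_succAbove_eq hxc
        rw [fo_B_succAbove hv] at hx
        exact ⟨j', hx, rfl⟩
    · rintro ⟨j', hj', rfl⟩
      rw [fo_B_succAbove hv]
      exact hj'
  rw [key, Finset.card_image_of_injective _ Fin.succAbove_right_injective]

lemma posStat_B_c (hv : ∀ j, ∃ i, v i = j) :
    posStat (n+1) (m+1) (Fin.snoc (c.succAbove ∘ v) c) c = m + 1 := by
  unfold posStat
  have : (Finset.univ.filter fun c' : Fin (m+1) =>
      firstOcc (n+1) (m+1) (Fin.snoc (c.succAbove ∘ v) c) c'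
        ≤ firstOcc (n+1) (m+1) (Fin.snoc (c.succAbove ∘ v) c) c) = Finset.univ := by
    apply Finset.filter_true_of_mem
    intro x _
    rw [fo_B_c]
    exact fo_B_le hv x
  rw [this]
  simp

lemma invStat_B (hv : ∀ j, ∃ i, v i = j) :
    invStat (n+1) (m+1) (Fin.snoc (c.succAbove ∘ v) c) = invStat n m v + (m - c.val) := by
  classical
  unfold invStat
  have key : (Finset.univ.filter fun p : Fin (m+1) × Fin (m+1) =>
      firstOcc (n+1) (m+1) (Fin.snoc (c.succAbove ∘ v) c) p.1
        < firstOcc (n+1) (m+1) (Fin.snoc (c.succAbove ∘ v) c) p.2 ∧ p.2 < p.1)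
      = ((Finset.univ.filter fun p : Fin m × Fin m =>
            firstOcc n m v p.1 < firstOcc n m v p.2 ∧ p.2 < p.1).image
          (fun p => (c.succAbove p.1, c.succAbove p.2)))
        ∪ ((Finset.Ioi c).image fun x => (x, c)) := by
    ext p
    simp only [Finset.mem_filter, Finset.mem_union, Finset.mem_image, Finset.mem_univ, true_and,
      Finset.mem_Ioi]
    constructor
    · rintro ⟨hfo, hlt⟩
      by_cases hp2 : p.2 = c
      · right
        exact ⟨p.1, hp2 ▸ hlt, by rw [← hp2]⟩
      · left
        obtain ⟨j2, hj2⟩ := Fin.exists_succAbove_eq hp2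
        have hp1 : p.1 ≠ c := by
          intro e
          rw [e, fo_B_c, ← hj2, fo_B_succAbove hv] at hfo
          exact absurd (hfo.trans (fo_B_lt hv j2)) (lt_irrefl n)
        obtain ⟨j1, hj1⟩ := Fin.exists_succAbove_eq hp1
        refine ⟨(j1, j2), ⟨?_, ?_⟩, by rw [hj1, hj2]⟩
        · rw [← hj1, ← hj2, fo_B_succAbove hv, fo_B_succAbove hv] at hfo
          exact hfo
        · exact Fin.succAbove_lt_succAbove_iff.1 (by rw [hj1, hj2]; exact hlt)
    · rintro (⟨p', ⟨h1, h2⟩, rfl⟩ | ⟨x, hx, rfl⟩)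
      · refine ⟨?_, ?_⟩
        · rw [fo_B_succAbove hv, fo_B_succAbove hv]
          exact h1
        · exact Fin.succAbove_lt_succAbove_iff.2 h2
      · refine ⟨?_, hx⟩
        rw [fo_B_c]
        obtain ⟨j, rfl⟩ := Fin.exists_succAbove_eq hx.ne'
        rw [fo_B_succAbove hv]
        exact fo_B_lt hv j
  rw [key, Finset.card_union_of_disjoint, Finset.card_image_of_injective,
    Finset.card_image_of_injective, Fin.card_Ioi]
  · simp
  · exact fun x y h => by simpa [Prod.ext_iff] using h
  · intro p1 p2 h
    have := Prod.ext_iff.1 h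
    exact Prod.ext (Fin.succAbove_right_injective this.1) (Fin.succAbove_right_injective this.2)
  · rw [Finset.disjoint_right]
    rintro p hp hp'
    simp only [Finset.mem_image, Finset.mem_Ioi] at hp hp'
    obtain ⟨x, _, rfl⟩ := hp
    obtain ⟨p', _, he⟩ := hp'
    exact Fin.succAbove_ne c p'.2 (congrArg Prod.snd he)

lemma dimStat_B (hv : ∀ j, ∃ i, v i = j) :
    dimStat (n+1) (m+1) (Fin.snoc (c.succAbove ∘ v) c) = dimStat n m v + c.val := by
  unfold dimStat
  rw [invStat_B hv, Fin.sum_univ_castSucc]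
  have h1 : ∀ i : Fin n,
      (Fin.snoc (c.succAbove ∘ v) c : Fin (n+1) → Fin (m+1)) i.castSucc = c.succAbove (v i) :=
    fun i => by simp
  have h2 : (Fin.snoc (c.succAbove ∘ v) c : Fin (n+1) → Fin (m+1)) (Fin.last n) = c := by simp
  simp only [h1, h2, posStat_B_succAbove hv, posStat_B_c hv]
  have hc : (c.val : ℤ) ≤ m := by exact_mod_cast Nat.lt_succ_iff.1 c.isLt
  push_cast [Nat.cast_sub (Nat.lt_succ_iff.1 c.isLt)]
  ring
end CaseB

lemma toLaurent_qnat (K : ℕ) :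
    Polynomial.toLaurent (qnat K) = ∑ j ∈ Finset.range K, LaurentPolynomial.T (R := ℤ) (j : ℤ) := by
  unfold qnat
  rw [map_sum]
  exact Finset.sum_congr rfl fun j _ => Polynomial.toLaurent_X_pow j

lemma sum_T_fin (K : ℕ) :
    ∑ c : Fin K, LaurentPolynomial.T (R := ℤ) (c.val : ℤ) = Polynomial.toLaurent (qnat K) := by
  rw [toLaurent_qnat]
  exact Fin.sum_univ_eq_sum_range (fun j => LaurentPolynomial.T (R := ℤ) (j : ℤ)) K

lemma main_lemma (n : ℕ) : ∀ k : ℕ,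
    ∑ w ∈ Finset.univ.filter (fun w : Fin n → Fin k => ∀ c, ∃ i, w i = c),
        LaurentPolynomial.T (R := ℤ) (dimStat n k w)
      = Polynomial.toLaurent (qFactorial k * qStirling n k) := by
  induction n with
  | zero =>
    intro k
    match k with
    | 0 =>
      rw [Finset.filter_true_of_mem (fun w _ => fun c => c.elim0)]
      rw [show (Finset.univ : Finset (Fin 0 → Fin 0)) = {(fun i => i.elim0)} from by
        apply Finset.eq_of_subset_of_card_le (by intro x _; simp [Finset.mem_singleton]; funext i; exact i.elim0)
        simp]
      rw [Finset.sum_singleton]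
      have h1 : dimStat 0 0 (fun i => i.elim0) = 0 := by
        simp [dimStat, invStat]
      rw [h1, LaurentPolynomial.T_zero]
      have : qFactorial 0 * qStirling 0 0 = 1 := by
        simp [qFactorial, qStirling]
      rw [this, Polynomial.toLaurent_one]
    | k + 1 =>
      rw [Finset.filter_false_of_mem (fun w _ h => by obtain ⟨i, _⟩ := h 0; exact i.elim0)]
      have : qStirling 0 (k+1) = 0 := rfl
      simp [this]
  | succ n ih =>
    intro k
    match k with
    | 0 =>
      rw [Finset.univ_eq_empty, Finset.filter_empty, Finset.sum_empty]
      have : qStirling (n+1) 0 = 0 := rfl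
      simp [this]
    | m + 1 =>
      classical
      rw [← Finset.sum_filter_add_sum_filter_not
        (Finset.univ.filter (fun w : Fin (n+1) → Fin (m+1) => ∀ c, ∃ i, w i = c))
        (fun w => ∃ i : Fin n, w i.castSucc = w (Fin.last n))
        (fun w => LaurentPolynomial.T (R := ℤ) (dimStat (n+1) (m+1) w))]
      have hA : ∑ w ∈ (Finset.univ.filter
            (fun w : Fin (n+1) → Fin (m+1) => ∀ c, ∃ i, w i = c)).filter
            (fun w => ∃ i : Fin n, w i.castSucc = w (Fin.last n)),
            LaurentPolynomial.T (R := ℤ) (dimStat (n+1) (m+1) w)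
          = ∑ p ∈ (Finset.univ.filter
              (fun w' : Fin n → Fin (m+1) => ∀ c, ∃ i, w' i = c)) ×ˢ
              (Finset.univ : Finset (Fin (m+1))),
            LaurentPolynomial.T (R := ℤ)
              (dimStat n (m+1) p.1 + ((posStat n (m+1) p.1 p.2 : ℤ) - 1)) := by
        rw [eq_comm]
        apply Finset.sum_bij (i := fun p _ => (Fin.snoc p.1 p.2 : Fin (n+1) → Fin (m+1)))
        · rintro ⟨w', c⟩ hp
          simp only [Finset.mem_product, Finset.mem_filter, Finset.mem_univ, true_and] at hp ⊢
          obtain ⟨hw, -⟩ := hp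
          constructor
          · intro b
            obtain ⟨i, hi⟩ := hw b
            exact ⟨i.castSucc, by simp [hi]⟩
          · obtain ⟨i, hi⟩ := hw c
            exact ⟨i, by simp [hi]⟩
        · rintro ⟨w1, c1⟩ h1 ⟨w2, c2⟩ h2 he
          have hl := congrFun he (Fin.last n)
          simp only [Fin.snoc_last] at hl
          have hc : w1 = w2 := by
            funext i
            have := congrFun he i.castSucc
            simpa using this
          simp [hc, hl]
        · intro w hw
          simp only [Finset.mem_filter, Finset.mem_univ, true_and] at hw
          obtain ⟨hsurj, i₀, hi₀⟩ := hw
          refine ⟨(Fin.init w, w (Fin.last n)), ?_, Fin.snoc_init_self w⟩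
          simp only [Finset.mem_product, Finset.mem_filter, Finset.mem_univ, true_and, and_true]
          intro b
          obtain ⟨i, hi⟩ := hsurj b
          by_cases hil : i = Fin.last n
          · exact ⟨i₀, by rw [Fin.init, hi₀, ← hil, hi]⟩
          · obtain ⟨j, rfl⟩ := Fin.exists_castSucc_eq.2 hil
            exact ⟨j, by rw [Fin.init, hi]⟩
        · rintro ⟨w', c⟩ hp
          simp only [Finset.mem_product, Finset.mem_filter, Finset.mem_univ, true_and] at hp
          rw [dimStat_snoc_A hp.1 c]
      have hB : ∑ w ∈ (Finset.univ.filter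
            (fun w : Fin (n+1) → Fin (m+1) => ∀ c, ∃ i, w i = c)).filter
            (fun w => ¬ ∃ i : Fin n, w i.castSucc = w (Fin.last n)),
            LaurentPolynomial.T (R := ℤ) (dimStat (n+1) (m+1) w)
          = ∑ p ∈ (Finset.univ : Finset (Fin (m+1))) ×ˢ
              (Finset.univ.filter (fun v : Fin n → Fin m => ∀ c, ∃ i, v i = c)),
            LaurentPolynomial.T (R := ℤ) (dimStat n m p.2 + (p.1.val : ℤ)) := by
        rw [eq_comm]
        apply Finset.sum_bij
          (i := fun p _ => (Fin.snoc (p.1.succAbove ∘ p.2) p.1 : Fin (n+1) → Fin (m+1)))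
        · rintro ⟨c, v⟩ hp
          simp only [Finset.mem_product, Finset.mem_filter, Finset.mem_univ, true_and] at hp ⊢
          have hv := hp
          refine ⟨surj_B hv, ?_⟩
          rintro ⟨i, hi⟩
          rw [Fin.snoc_last] at hi
          have : (Fin.snoc (c.succAbove ∘ v) c : Fin (n+1) → Fin (m+1)) i.castSucc
              = c.succAbove (v i) := by simp
          rw [this] at hi
          exact Fin.succAbove_ne c (v i) hi
        · rintro ⟨c1, v1⟩ h1 ⟨c2, v2⟩ h2 he
          have hl := congrFun he (Fin.last n)
          simp only [Fin.snoc_last] at hl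
          subst hl
          have hv : v1 = v2 := by
            funext i
            have := congrFun he i.castSucc
            simp only [Fin.snoc_castSucc, Function.comp_apply] at this
            exact Fin.succAbove_right_injective this
          simp [hv]
        · intro w hw
          simp only [Finset.mem_filter, Finset.mem_univ, true_and] at hw
          obtain ⟨hsurj, hP⟩ := hw
          set c := w (Fin.last n) with hc
          have hne : ∀ i : Fin n, w i.castSucc ≠ c := fun i h => hP ⟨i, h⟩
          choose v hv using fun i => Fin.exists_succAbove_eq (hne i)
          have hvs : ∀ j, ∃ i, v i = j := by
            intro j
            obtain ⟨i, hi⟩ := hsurj (c.succAbove j)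
            have hil : i ≠ Fin.last n := by
              intro e
              rw [e, ← hc] at hi
              exact Fin.succAbove_ne c j hi.symm
            obtain ⟨i₀, rfl⟩ := Fin.exists_castSucc_eq.2 hil
            refine ⟨i₀, Fin.succAbove_right_injective (p := c) ?_⟩
            rw [hv i₀, hi]
          refine ⟨(c, v), ?_, ?_⟩
          · simp only [Finset.mem_product, Finset.mem_filter, Finset.mem_univ, true_and]
            exact hvs
          · funext i
            refine Fin.lastCases ?_ (fun i₀ => ?_) i
            · simp [hc]
            · simp only [Fin.snoc_castSucc, Function.comp_apply]
              exact hv i₀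
        · rintro ⟨c, v⟩ hp
          simp only [Finset.mem_product, Finset.mem_filter, Finset.mem_univ, true_and] at hp
          rw [dimStat_B hp]
      rw [hA, hB, Finset.sum_product, Finset.sum_product]
      have hA2 : ∀ w' ∈ Finset.univ.filter
            (fun w' : Fin n → Fin (m+1) => ∀ c, ∃ i, w' i = c),
          ∑ c : Fin (m+1), LaurentPolynomial.T (R := ℤ)
              (dimStat n (m+1) w' + ((posStat n (m+1) w' c : ℤ) - 1))
            = LaurentPolynomial.T (R := ℤ) (dimStat n (m+1) w')
              * Polynomial.toLaurent (qnat (m+1)) := by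
        intro w' hw'
        simp only [Finset.mem_filter, Finset.mem_univ, true_and] at hw'
        calc ∑ c : Fin (m+1), LaurentPolynomial.T (R := ℤ)
              (dimStat n (m+1) w' + ((posStat n (m+1) w' c : ℤ) - 1))
            = ∑ c : Fin (m+1), LaurentPolynomial.T (R := ℤ) (dimStat n (m+1) w')
              * LaurentPolynomial.T (R := ℤ) ((posStat n (m+1) w' c : ℤ) - 1) := by
              exact Finset.sum_congr rfl fun c _ => LaurentPolynomial.T_add _ _
          _ = LaurentPolynomial.T (R := ℤ) (dimStat n (m+1) w')
              * ∑ c : Fin (m+1), LaurentPolynomial.T (R := ℤ) ((posStat n (m+1) w' c : ℤ) - 1) := by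
              rw [Finset.mul_sum]
          _ = _ := by rw [sum_T_posStat hw', ← toLaurent_qnat]
      rw [Finset.sum_congr rfl hA2]
      have hB2 : ∀ c : Fin (m+1),
          ∑ v ∈ Finset.univ.filter (fun v : Fin n → Fin m => ∀ c, ∃ i, v i = c),
            LaurentPolynomial.T (R := ℤ) (dimStat n m v + (c.val : ℤ))
          = LaurentPolynomial.T (R := ℤ) (c.val : ℤ)
            * Polynomial.toLaurent (qFactorial m * qStirling n m) := by
        intro c
        rw [← ih m, Finset.mul_sum]
        exact Finset.sum_congr rfl fun v _ => by
          rw [LaurentPolynomial.T_add, mul_comm]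
      rw [Finset.sum_congr rfl (fun c _ => hB2 c), ← Finset.sum_mul, ih (m+1), ← Finset.sum_mul,
        sum_T_fin]
      rw [← map_mul, ← map_mul, ← map_add]
      congr 1
      have h1 : qStirling (n+1) (m+1) = qStirling n m + qnat (m+1) * qStirling n (m+1) := rfl
      have h2 : qFactorial (m+1) = qFactorial m * qnat (m+1) := Finset.prod_range_succ _ _
      rw [h1, h2]
      ring


/-- The statistic `dim` is Mahonian on the set `W_{n,k}` of words in `{1,…,k}^n` in which all
letters appear: `∑_{w ∈ W_{n,k}} q^{dim(w)} = [k]!_q · Stir_q(n,k)`. -/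
theorem stmt5 (n k : ℕ) (hk : 1 ≤ k) :
    ∑ w ∈ Finset.univ.filter (fun w : Fin n → Fin k => ∀ c, ∃ i, w i = c),
        LaurentPolynomial.T (R := ℤ) (dimStat n k w)
      = Polynomial.toLaurent (qFactorial k * qStirling n k) := main_lemma n k
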